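/- For every graph G on n vertices and every k with 1 ≤ k ≤ n, the sum of the k largest eigenvalues of G satisfies μ₁(G) + ... + μ_k(G) ≤ ‖G‖_{F_k} ≤ (1 + √k) n / 2. -/

import Mathlib

open Finset

/-- Singular values (unsorted) of a complex matrix: square roots of eigenvalues of `A * Aᴴ`. -/
noncomputable def svalC {m n : ℕ} (A : Matrix (Fin m) (Fin n) ℂ) : Fin m → ℝ :=
  fun i => Real.sqrt ((Matrix.isHermitian_mul_conjTranspose_self A).eigenvalues i)

/-- Singular values of a complex matrix sorted in decreasing order. -/
noncomputable def svalCSorted {m n : ℕ} (A : Matrix (Fin m) (Fin n) ℂ) : Fin m → ℝ :=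
  svalC A ∘ ⇑(Tuple.sort (fun i => -(svalC A i)))

/-- Singular values (unsorted) of a real matrix. -/
noncomputable def svalR {m n : ℕ} (A : Matrix (Fin m) (Fin n) ℝ) : Fin m → ℝ :=
  fun i => Real.sqrt ((Matrix.isHermitian_mul_conjTranspose_self A).eigenvalues i)

/-- Singular values of a real matrix sorted in decreasing order. -/
noncomputable def svalRSorted {m n : ℕ} (A : Matrix (Fin m) (Fin n) ℝ) : Fin m → ℝ :=
  svalR A ∘ ⇑(Tuple.sort (fun i => -(svalR A i)))

/-- Ky Fan `k`-norm of a complex matrix: the sum of its `k` largest singular values. -/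
noncomputable def kyFanC {m n : ℕ} (A : Matrix (Fin m) (Fin n) ℂ) (k : ℕ) : ℝ :=
  ∑ i : Fin m, if (i : ℕ) < k then svalCSorted A i else 0

/-- Ky Fan `k`-norm of a real matrix. -/
noncomputable def kyFanR {m n : ℕ} (A : Matrix (Fin m) (Fin n) ℝ) (k : ℕ) : ℝ :=
  ∑ i : Fin m, if (i : ℕ) < k then svalRSorted A i else 0

/-- The adjacency matrix of a simple graph is Hermitian (over `ℝ`). -/
lemma adjHerm {n : ℕ} (G : SimpleGraph (Fin n)) [DecidableRel G.Adj] :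
    (G.adjMatrix ℝ).IsHermitian := by
  have h := G.isSymm_adjMatrix (α := ℝ)
  first
  | exact (Matrix.conjTranspose_eq_transpose_of_trivial _).trans h
  | simpa [Matrix.IsHermitian, Matrix.conjTranspose, Matrix.IsSymm, Matrix.transpose,
      starRingEnd_apply, star_trivial] using h

/-- Singular values of a graph (unsorted). -/
noncomputable def gsval {n : ℕ} (G : SimpleGraph (Fin n)) [DecidableRel G.Adj] : Fin n → ℝ :=
  svalR (G.adjMatrix ℝ)

/-- Singular values of a graph sorted in decreasing order. -/
noncomputable def gsvalSorted {n : ℕ} (G : SimpleGraph (Fin n)) [DecidableRel G.Adj] : Fin n → ℝ :=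
  svalRSorted (G.adjMatrix ℝ)

/-- Eigenvalues of a graph sorted in decreasing order: `geigSorted G 0 = μ₁ ≥ ⋯ ≥ μₙ`. -/
noncomputable def geigSorted {n : ℕ} (G : SimpleGraph (Fin n)) [DecidableRel G.Adj] : Fin n → ℝ :=
  (adjHerm G).eigenvalues ∘ ⇑(Tuple.sort (fun i => -((adjHerm G).eigenvalues i)))

/-- Ky Fan `k`-norm of a graph. -/
noncomputable def kyFanG {n : ℕ} (G : SimpleGraph (Fin n)) [DecidableRel G.Adj] (k : ℕ) : ℝ :=
  kyFanR (G.adjMatrix ℝ) k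


open Finset Matrix Polynomial

section Aux

variable {n : ℕ}

noncomputable def dsort {n : ℕ} (v : Fin n → ℝ) : Fin n → ℝ :=
  v ∘ ⇑(Tuple.sort (fun i => -(v i)))

lemma dsort_antitone (v : Fin n → ℝ) : Antitone (dsort v) := by
  have h := Tuple.monotone_sort (fun i => -(v i))
  intro i j hij
  have := h hij
  simp only [Function.comp_apply] at this
  simpa [dsort] using this

lemma dsort_sorted_ofFn (v : Fin n → ℝ) :
    (List.ofFn (dsort v)).Pairwise (· ≥ ·) := by
  rw [List.pairwise_ofFn]
  intro a b hab
  exact dsort_antitone v hab.le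

lemma dsort_eq_of_multiset_eq {v w : Fin n → ℝ}
    (h : Multiset.map v Finset.univ.val = Multiset.map w Finset.univ.val) :
    dsort v = dsort w := by
  rw [← List.ofFn_inj]
  apply List.Perm.eq_of_pairwise' (dsort_sorted_ofFn v) (dsort_sorted_ofFn w)
  have hv : (List.ofFn (dsort v)).Perm (List.ofFn v) := Equiv.Perm.ofFn_comp_perm _ v
  have hw : (List.ofFn (dsort w)).Perm (List.ofFn w) := Equiv.Perm.ofFn_comp_perm _ w
  refine hv.trans (.trans ?_ hw.symm)
  rw [← Multiset.coe_eq_coe]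
  have e : ∀ u : Fin n → ℝ, (↑(List.ofFn u) : Multiset ℝ) = Multiset.map u Finset.univ.val := by
    intro u
    rw [List.ofFn_eq_map, Fin.univ_def]
    rfl
  rw [e, e, h]

lemma dsort_le_dsort {v w : Fin n → ℝ} (h : ∀ i, v i ≤ w i) (i : Fin n) :
    dsort v i ≤ dsort w i := by
  by_contra hc
  push_neg at hc
  set σv := Tuple.sort (fun j => -(v j)) with hσv
  set σw := Tuple.sort (fun j => -(w j)) with hσw
  have hmap : ∀ j ∈ Finset.Iic i, σw⁻¹ (σv j) ∈ Finset.Iio i := by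
    intro j hj
    simp only [Finset.mem_Iic] at hj
    have h1 : dsort v i ≤ v (σv j) := dsort_antitone v hj
    have h2 : v (σv j) ≤ w (σv j) := h _
    have h3 : dsort w (σw⁻¹ (σv j)) = w (σv j) := by
      simp [dsort, hσw]
    simp only [Finset.mem_Iio]
    by_contra hlt
    push_neg at hlt
    have := dsort_antitone w hlt
    rw [h3] at this
    linarith
  have hinj : Set.InjOn (fun j => σw⁻¹ (σv j)) (Finset.Iic i) := by
    intro a _ b _ hab
    simpa using hab
  have hcard := Finset.card_le_card_of_injOn _ hmap hinj
  rw [Fin.card_Iic, Fin.card_Iio] at hcard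
  omega

lemma det_smul_one_sub_conj {U : Matrix (Fin n) (Fin n) ℝ}
    (hU : U ∈ Matrix.unitaryGroup (Fin n) ℝ) (d : Fin n → ℝ) (x : ℝ) :
    (x • (1 : Matrix (Fin n) (Fin n) ℝ) - U * Matrix.diagonal d * star U).det
      = ∏ i, (x - d i) := by
  have h1 : x • (1 : Matrix (Fin n) (Fin n) ℝ)
      = U * (x • (1 : Matrix (Fin n) (Fin n) ℝ)) * star U := by
    rw [Matrix.mul_smul, mul_one, Matrix.smul_mul, (Matrix.mem_unitaryGroup_iff).mp hU]
  have h2 : x • (1 : Matrix (Fin n) (Fin n) ℝ) - U * Matrix.diagonal d * star U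
      = U * (x • (1 : Matrix (Fin n) (Fin n) ℝ) - Matrix.diagonal d) * star U := by
    rw [Matrix.mul_sub, Matrix.sub_mul, ← h1]
  rw [h2, Matrix.det_mul, Matrix.det_mul]
  have h3 : U.det * (x • (1 : Matrix (Fin n) (Fin n) ℝ) - Matrix.diagonal d).det * (star U).det
      = (U.det * (star U).det) * (x • (1 : Matrix (Fin n) (Fin n) ℝ) - Matrix.diagonal d).det := by
    ring
  rw [h3, ← Matrix.det_mul, (Matrix.mem_unitaryGroup_iff).mp hU, Matrix.det_one, one_mul,
    Matrix.smul_one_eq_diagonal, Matrix.diagonal_sub, Matrix.det_diagonal]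

lemma multiset_eigs {A : Matrix (Fin n) (Fin n) ℝ} (hA : A.IsHermitian) :
    Multiset.map (Matrix.isHermitian_mul_conjTranspose_self A).eigenvalues Finset.univ.val
      = Multiset.map (fun i => hA.eigenvalues i ^ 2) Finset.univ.val := by
  set γ := (Matrix.isHermitian_mul_conjTranspose_self A).eigenvalues
  set μ := hA.eigenvalues
  have key : ∀ x : ℝ, (∏ i, (x - γ i)) = ∏ i, (x - μ i ^ 2) := by
    intro x
    have hB := Matrix.isHermitian_mul_conjTranspose_self A
    have hBspec := hB.spectral_theorem
    have hAspec := hA.spectral_theorem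
    have hγ : (x • (1 : Matrix (Fin n) (Fin n) ℝ) - A * Aᴴ).det = ∏ i, (x - γ i) := by
      nth_rewrite 1 [hBspec]
      simpa using det_smul_one_sub_conj hB.eigenvectorUnitary.2 γ x
    have hμ : (x • (1 : Matrix (Fin n) (Fin n) ℝ) - A * Aᴴ).det = ∏ i, (x - μ i ^ 2) := by
      set U : Matrix (Fin n) (Fin n) ℝ := ↑hA.eigenvectorUnitary with hU
      set D : Matrix (Fin n) (Fin n) ℝ := Matrix.diagonal (RCLike.ofReal ∘ μ) with hD
      have hAH : Aᴴ = A := hA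
      have hUU : star U * U = 1 := Matrix.mem_unitaryGroup_iff'.mp hA.eigenvectorUnitary.2
      have hAA : A * Aᴴ = U * Matrix.diagonal (fun i => μ i ^ 2) * star U := by
        conv_lhs => rw [hAH, hAspec, Unitary.conjStarAlgAut_apply]
        have h4 : (U * D * star U) * (U * D * star U) = U * (D * D) * star U := by
          rw [mul_assoc (U * D) (star U) (U * D * star U), ← mul_assoc (star U) (U * D) (star U),
            ← mul_assoc (star U) U D, hUU, one_mul, ← mul_assoc (U * D) D (star U),
            mul_assoc U D D]
        rw [h4, hD]
        congr 1
        rw [Matrix.diagonal_mul_diagonal]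
        congr 1
        funext i
        simp [pow_two, μ]
      rw [hAA]
      simpa using det_smul_one_sub_conj hA.eigenvectorUnitary.2 (fun i => μ i ^ 2) x
    rw [← hγ, hμ]
  have hpoly : (Multiset.map (fun a => X - C a) (Multiset.map γ Finset.univ.val)).prod
      = (Multiset.map (fun a => X - C a) (Multiset.map (fun i => μ i ^ 2) Finset.univ.val)).prod := by
    apply Polynomial.funext
    intro x
    rw [Polynomial.eval_multiset_prod, Polynomial.eval_multiset_prod]
    have e : ∀ v : Fin n → ℝ,
        (Multiset.map (Polynomial.eval x) (Multiset.map (fun a => X - C a) (Multiset.map v Finset.univ.val))).prod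
          = ∏ i, (x - v i) := by
      intro v
      rw [Multiset.map_map, Multiset.map_map, Finset.prod_eq_multiset_prod]
      congr 1
      apply Multiset.map_congr rfl
      intro i _
      simp
    rw [e, e, key x]
  have := congrArg Polynomial.roots hpoly
  rwa [Polynomial.roots_multiset_prod_X_sub_C, Polynomial.roots_multiset_prod_X_sub_C] at this

lemma rayleigh_ones {B : Matrix (Fin n) (Fin n) ℝ} (hB : B.IsHermitian) {b : ℝ}
    (hb : ∀ i, hB.eigenvalues i ≤ b) :
    (fun _ : Fin n => (1:ℝ)) ⬝ᵥ (B *ᵥ fun _ => (1:ℝ)) ≤ b * n := by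
  set U : Matrix (Fin n) (Fin n) ℝ := ↑hB.eigenvectorUnitary with hUdef
  set γ := hB.eigenvalues with hγdef
  set u : Fin n → ℝ := fun _ => 1 with hu
  set y : Fin n → ℝ := star U *ᵥ u with hy
  have hUU' : U * star U = 1 := Matrix.mem_unitaryGroup_iff.mp hB.eigenvectorUnitary.2
  have hstar : star U = Uᵀ := by
    rw [Matrix.star_eq_conjTranspose]
    ext i j
    simp [Matrix.conjTranspose_apply]
  have hvecMul : u ᵥ* U = y := by
    rw [hy, hstar, Matrix.mulVec_transpose]
  have hyy : y ⬝ᵥ y = (n : ℝ) := by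
    nth_rewrite 1 [hy, hstar, Matrix.mulVec_transpose, ← Matrix.dotProduct_mulVec]
    rw [hy, Matrix.mulVec_mulVec, hUU', Matrix.one_mulVec]
    simp [hu, dotProduct]
  have hquad : u ⬝ᵥ (B *ᵥ u) = ∑ i, γ i * (y i)^2 := by
    nth_rewrite 1 [hB.spectral_theorem]
    rw [Unitary.conjStarAlgAut_apply, ← Matrix.mulVec_mulVec, ← Matrix.mulVec_mulVec, Matrix.dotProduct_mulVec, hvecMul,
      ← hy]
    simp only [dotProduct, Matrix.mulVec_diagonal]
    apply Finset.sum_congr rfl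
    intro i _
    have : (RCLike.ofReal ∘ γ) i = γ i := by simp
    rw [this]; ring
  rw [hquad]
  calc ∑ i, γ i * (y i)^2 ≤ ∑ i, b * (y i)^2 := by
        apply Finset.sum_le_sum
        intro i _
        exact mul_le_mul_of_nonneg_right (hb i) (sq_nonneg _)
    _ = b * (y ⬝ᵥ y) := by
        rw [dotProduct, Finset.mul_sum]
        apply Finset.sum_congr rfl
        intro i _
        ring
    _ = b * n := by rw [hyy]

lemma trace_eq_sum_eigs {M : Matrix (Fin n) (Fin n) ℝ} (hM : M.IsHermitian) :
    M.trace = ∑ i, hM.eigenvalues i := by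
  nth_rewrite 1 [hM.spectral_theorem]
  rw [Unitary.conjStarAlgAut_apply, Matrix.trace_mul_comm, ← mul_assoc, Matrix.mem_unitaryGroup_iff'.mp hM.eigenvectorUnitary.2,
    one_mul, Matrix.trace_diagonal]
  simp

lemma scalar_bound {q nn s S : ℝ} (hq : 1 ≤ q) (hn : 0 ≤ nn) (hs : 0 ≤ s)
    (hS : s^2 ≤ S) (hSn : S ≤ nn * s) :
    s + Real.sqrt ((q^2 - 1) * (S - s^2)) ≤ (1 + q) * nn / 2 := by
  have hsn : s ≤ nn := by nlinarith
  have hq0 : 0 ≤ q^2 - 1 := by nlinarith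
  have h2 : 0 ≤ (1+q)*nn/2 - s := by nlinarith
  have h3 : Real.sqrt ((q^2-1)*(S-s^2)) ≤ Real.sqrt ((q^2-1)*(nn*s-s^2)) := by
    apply Real.sqrt_le_sqrt; nlinarith
  have h4 : Real.sqrt ((q^2-1)*(nn*s-s^2)) ≤ (1+q)*nn/2 - s := by
    rw [show (1+q)*nn/2 - s = Real.sqrt (((1+q)*nn/2 - s)^2) by rw [Real.sqrt_sq h2]]
    apply Real.sqrt_le_sqrt
    nlinarith [sq_nonneg ((1+q)*nn/2 - q*s)]
  linarith

lemma sum3 (f : Fin n → Fin n → ℝ) :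
    ∑ i, ∑ j, ∑ x, f i x * f j x = ∑ x, (∑ i, f i x)^2 := by
  calc ∑ i, ∑ j, ∑ x, f i x * f j x
      = ∑ i, ∑ x, ∑ j, f i x * f j x := by
        apply Finset.sum_congr rfl; intro i _; exact Finset.sum_comm
    _ = ∑ x, ∑ i, ∑ j, f i x * f j x := Finset.sum_comm
    _ = ∑ x, (∑ i, f i x)^2 := by
        apply Finset.sum_congr rfl; intro x _
        rw [pow_two, Finset.sum_mul_sum]

end Aux

/-- The sum of the `k` largest eigenvalues of a graph is at most `‖G‖_{F_k} ≤ (1 + √k)n/2`. -/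
theorem eig_sum_le_kyFan {n k : ℕ} (hk1 : 1 ≤ k) (hkn : k ≤ n)
    (G : SimpleGraph (Fin n)) [DecidableRel G.Adj] :
    (∑ i : Fin n, if (i : ℕ) < k then geigSorted G i else 0) ≤ kyFanG G k ∧
      kyFanG G k ≤ (1 + Real.sqrt k) * n / 2 := by
  haveI : NeZero n := ⟨by omega⟩
  set A := G.adjMatrix ℝ with hAdef
  have hA : A.IsHermitian := adjHerm G
  set μ := hA.eigenvalues with hμdef
  set γ := (Matrix.isHermitian_mul_conjTranspose_self A).eigenvalues with hγdef
  have hγ0 : ∀ i, 0 ≤ γ i := fun i => Matrix.eigenvalues_self_mul_conjTranspose_nonneg A i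
  -- sval as sqrt of γ
  have hsval : ∀ i, svalR A i = Real.sqrt (γ i) := fun i => rfl
  -- multiset identity: singular values = |eigenvalues|
  have hmul : Multiset.map (svalR A) Finset.univ.val
      = Multiset.map (fun i => |μ i|) Finset.univ.val := by
    have h1 := multiset_eigs hA
    have h2 : Multiset.map (svalR A) Finset.univ.val
        = Multiset.map Real.sqrt (Multiset.map γ Finset.univ.val) := by
      rw [Multiset.map_map]; rfl
    rw [h2, h1, Multiset.map_map]
    apply Multiset.map_congr rfl
    intro i _
    simp [Real.sqrt_sq_eq_abs]
    rfl
  have hsorted_eq : svalRSorted A = dsort (fun i => |μ i|) :=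
    dsort_eq_of_multiset_eq hmul
  set s := svalRSorted A with hsdef
  have hs_anti : Antitone s := by rw [hsorted_eq]; exact dsort_antitone _
  have hs_nonneg : ∀ i, 0 ≤ s i := fun i => Real.sqrt_nonneg _
  -- first inequality
  have first : (∑ i : Fin n, if (i : ℕ) < k then geigSorted G i else 0) ≤ kyFanG G k := by
    have hkf : kyFanG G k = ∑ i : Fin n, if (i : ℕ) < k then s i else 0 := rfl
    rw [hkf]
    apply Finset.sum_le_sum
    intro i _
    have hle : geigSorted G i ≤ s i := by
      rw [hsorted_eq]
      exact dsort_le_dsort (fun j => le_abs_self (μ j)) i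
    split
    · exact hle
    · exact le_refl 0
  refine ⟨first, ?_⟩
  -- each unsorted sval is ≤ s 0
  have hsval_le : ∀ i, svalR A i ≤ s 0 := by
    intro i
    set σ := Tuple.sort (fun j => -(svalR A j)) with hσ
    have h1 : s (σ⁻¹ i) = svalR A i := by
      show svalR A (σ (σ⁻¹ i)) = svalR A i
      rw [show σ (σ⁻¹ i) = i from σ.apply_symm_apply i]
    rw [← h1]
    exact hs_anti (Fin.zero_le _)
  have hs0 : 0 ≤ s 0 := hs_nonneg 0
  -- total sum of squares
  set S := ∑ i, (s i)^2 with hSdef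
  have hSsum : S = ∑ i, γ i := by
    rw [hSdef]
    have h1 : ∑ i, (s i)^2 = ∑ i, (svalR A i)^2 :=
      Equiv.sum_comp (Tuple.sort (fun j => -(svalR A j))) (fun j => (svalR A j)^2)
    rw [h1]
    apply Finset.sum_congr rfl
    intro i _
    rw [hsval i, Real.sq_sqrt (hγ0 i)]
  -- trace identity
  set Sm := ∑ i, ∑ j, A i j with hSmdef
  have htr : ∑ i, γ i = Sm := by
    have t1 : (A * Aᴴ).trace = ∑ i, γ i :=
      trace_eq_sum_eigs (Matrix.isHermitian_mul_conjTranspose_self A)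
    have t2 : (A * Aᴴ).trace = ∑ i, ∑ j, A i j * A i j := by
      rw [Matrix.trace]
      apply Finset.sum_congr rfl
      intro i _
      rw [Matrix.diag_apply, Matrix.mul_apply]
      apply Finset.sum_congr rfl
      intro j _
      rw [Matrix.conjTranspose_apply, star_trivial]
    have t3 : ∀ i j, A i j * A i j = A i j := by
      intro i j
      rw [hAdef]
      by_cases h : G.Adj i j <;> simp [SimpleGraph.adjMatrix_apply, h]
    rw [← t1, t2]
    apply Finset.sum_congr rfl
    intro i _
    exact Finset.sum_congr rfl (fun j _ => t3 i j)
  -- Rayleigh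
  have hray : (fun _ : Fin n => (1:ℝ)) ⬝ᵥ ((A * Aᴴ) *ᵥ fun _ => (1:ℝ)) ≤ (s 0)^2 * n := by
    apply rayleigh_ones (Matrix.isHermitian_mul_conjTranspose_self A)
    intro i
    show γ i ≤ (s 0)^2
    have h1 : γ i = (svalR A i)^2 := by rw [hsval i, Real.sq_sqrt (hγ0 i)]
    rw [h1]
    exact pow_le_pow_left₀ (Real.sqrt_nonneg _) (hsval_le i) 2
  have hc : (fun _ : Fin n => (1:ℝ)) ⬝ᵥ ((A * Aᴴ) *ᵥ fun _ => (1:ℝ))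
      = ∑ l, (∑ i, A i l)^2 := by
    simp only [dotProduct, Matrix.mulVec, dotProduct, Matrix.mul_apply,
      Matrix.conjTranspose_apply, star_trivial, one_mul, mul_one]
    exact sum3 A
  -- Cauchy-Schwarz on column sums
  have hcs : Sm^2 ≤ (n : ℝ) * ∑ l, (∑ i, A i l)^2 := by
    have h1 : Sm = ∑ l, ∑ i, A i l := Finset.sum_comm
    rw [h1]
    have := sq_sum_le_card_mul_sum_sq (s := (Finset.univ : Finset (Fin n)))
      (f := fun l => ∑ i, A i l)
    simpa using this
  have hSm_nonneg : 0 ≤ Sm := by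
    apply Finset.sum_nonneg; intro i _
    apply Finset.sum_nonneg; intro j _
    rw [hAdef]
    by_cases h : G.Adj i j <;> simp [SimpleGraph.adjMatrix_apply, h]
  have hSn : Sm ≤ (n : ℝ) * s 0 := by
    have h1 : Sm^2 ≤ ((n:ℝ) * s 0)^2 := by
      calc Sm^2 ≤ (n : ℝ) * ∑ l, (∑ i, A i l)^2 := hcs
        _ ≤ (n : ℝ) * ((s 0)^2 * n) := by
            rw [← hc]
            exact mul_le_mul_of_nonneg_left hray (Nat.cast_nonneg n)
        _ = ((n:ℝ) * s 0)^2 := by ring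
    nlinarith [mul_nonneg (Nat.cast_nonneg (α := ℝ) n) hs0]
  have hSS : S ≤ (n : ℝ) * s 0 := by rw [hSsum, htr]; exact hSn
  -- decompose kyFan
  have hkf : kyFanG G k = ∑ i : Fin n, if (i : ℕ) < k then s i else 0 := rfl
  set g : Fin n → ℝ := fun i => if (i : ℕ) < k then s i else 0 with hg
  have hg0 : g 0 = s 0 := by
    rw [hg]
    show (if ((0:Fin n):ℕ) < k then s 0 else 0) = s 0
    rw [if_pos (by simp; omega)]
  have hsplit : kyFanG G k = s 0 + ∑ i ∈ Finset.univ.erase 0, g i := by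
    rw [hkf, ← Finset.add_sum_erase Finset.univ g (Finset.mem_univ 0), hg0]
  set P := ∑ i ∈ Finset.univ.erase 0, g i with hP
  set E : Finset (Fin n) := (Finset.univ.erase 0).filter (fun i => (i : ℕ) < k) with hE
  have hPE : P = ∑ i ∈ E, s i := by
    rw [hP, hE, Finset.sum_filter]
  have hEcard : E.card = k - 1 := by
    rw [hE, Finset.filter_erase]
    have hF : (Finset.univ.filter (fun i : Fin n => (i : ℕ) < k)) =
        Finset.map (Fin.castLEEmb hkn) Finset.univ := by
      ext a
      simp only [Finset.mem_filter, Finset.mem_univ, true_and, Finset.mem_map,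
        Fin.castLEEmb, Function.Embedding.coeFn_mk]
      constructor
      · intro h
        exact ⟨⟨(a : ℕ), h⟩, by ext; simp [Fin.castLE]⟩
      · rintro ⟨b, rfl⟩
        exact b.isLt.trans_le (le_refl k)
    have h0mem : (0 : Fin n) ∈ Finset.univ.filter (fun i : Fin n => (i : ℕ) < k) := by
      simp only [Finset.mem_filter, Finset.mem_univ, true_and, Fin.val_zero]
      omega
    rw [Finset.card_erase_of_mem h0mem, hF, Finset.card_map, Finset.card_univ,
      Fintype.card_fin]
  -- Q = S - s0^2
  set Q := ∑ i ∈ Finset.univ.erase 0, (s i)^2 with hQ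
  have hQeq : Q = S - (s 0)^2 := by
    have h : s 0 ^ 2 + ∑ x ∈ Finset.univ.erase 0, s x ^ 2 = ∑ x : Fin n, s x ^ 2 :=
      Finset.add_sum_erase Finset.univ (fun i => (s i)^2) (Finset.mem_univ (0 : Fin n))
    rw [hQ, hSdef]
    linarith
  have hQ0 : 0 ≤ Q := Finset.sum_nonneg (fun i _ => sq_nonneg _)
  -- Cauchy-Schwarz on top k-1 tail
  have hPsq : P^2 ≤ ((k : ℝ) - 1) * Q := by
    rw [hPE]
    calc (∑ i ∈ E, s i)^2 ≤ (E.card : ℝ) * ∑ i ∈ E, (s i)^2 := sq_sum_le_card_mul_sum_sq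
      _ ≤ ((k : ℝ) - 1) * Q := by
          apply mul_le_mul
          · rw [hEcard]
            have : ((k - 1 : ℕ) : ℝ) = (k : ℝ) - 1 := by
              rw [Nat.cast_sub hk1]; simp
            rw [this]
          · rw [hQ]
            apply Finset.sum_le_sum_of_subset_of_nonneg
            · rw [hE]; exact Finset.filter_subset _ _
            · intro i _ _; exact sq_nonneg _
          · exact Finset.sum_nonneg (fun i _ => sq_nonneg _)
          · have : (1:ℝ) ≤ (k:ℝ) := by exact_mod_cast hk1
            linarith
  have hPnonneg : 0 ≤ P := by
    rw [hPE]
    apply Finset.sum_nonneg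
    intro i _
    exact hs_nonneg i
  have hPle : P ≤ Real.sqrt (((k : ℝ) - 1) * (S - (s 0)^2)) := by
    have hk1' : (1:ℝ) ≤ (k:ℝ) := by exact_mod_cast hk1
    have hynn : 0 ≤ ((k:ℝ) - 1) * (S - (s 0)^2) := by
      rw [← hQeq]; exact mul_nonneg (by linarith) hQ0
    exact (Real.le_sqrt hPnonneg hynn).mpr (by rw [← hQeq]; exact hPsq)
  -- put together
  have hq1 : (1:ℝ) ≤ Real.sqrt k := by
    rw [Real.one_le_sqrt]
    exact_mod_cast hk1
  have hq2 : (Real.sqrt k)^2 = (k : ℝ) := Real.sq_sqrt (Nat.cast_nonneg k)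
  have hfin := scalar_bound (q := Real.sqrt k) (nn := (n:ℝ)) (s := s 0) (S := S)
    hq1 (Nat.cast_nonneg n) hs0 (by linarith [hQ0, hQeq]) hSS
  rw [hq2] at hfin
  calc kyFanG G k = s 0 + P := hsplit
    _ ≤ s 0 + Real.sqrt (((k : ℝ) - 1) * (S - (s 0)^2)) := by linarith
    _ ≤ (1 + Real.sqrt k) * n / 2 := hfin
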